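/- Let P, Q, R be plane posets with |P| + |Q| = |R|. Then PQ ≤ R if, and only if, there exists a plane subposet I₀ of R such that R = (R∖I₀) I₀, P ≤ R∖I₀, and Q ≤ I₀. Moreover, when this holds, such an I₀ is unique and equals θ_{PQ,R}(Q). -/

import Mathlib

open scoped TensorProduct
open scoped Classical

noncomputable section

/-- A plane poset structure on a set `α`: two partial orders `≤_h` (`hle`) and `≤_r` (`rle`)
such that two distinct elements are comparable for `≤_h` if and only if they are not
comparable for `≤_r`. -/
structure PlanePoset (α : Type) where
  hle : α → α → Prop
  rle : α → α → Prop
  hle_refl : ∀ x, hle x x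
  hle_antisymm : ∀ x y, hle x y → hle y x → x = y
  hle_trans : ∀ x y z, hle x y → hle y z → hle x z
  rle_refl : ∀ x, rle x x
  rle_antisymm : ∀ x y, rle x y → rle y x → x = y
  rle_trans : ∀ x y z, rle x y → rle y z → rle x z
  compat : ∀ x y, x ≠ y → ((hle x y ∨ hle y x) ↔ ¬ (rle x y ∨ rle y x))

namespace PlanePoset

variable {α β : Type}

/-- The induced (total) order `x ≤ y iff x ≤_h y or x ≤_r y`. -/
def tle (P : PlanePoset α) (x y : α) : Prop := P.hle x y ∨ P.rle x y

/-- Transport of a plane poset structure along a bijection. -/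
def map (e : α ≃ β) (P : PlanePoset α) : PlanePoset β where
  hle x y := P.hle (e.symm x) (e.symm y)
  rle x y := P.rle (e.symm x) (e.symm y)
  hle_refl x := P.hle_refl _
  hle_antisymm x y h1 h2 := e.symm.injective (P.hle_antisymm _ _ h1 h2)
  hle_trans x y z h1 h2 := P.hle_trans _ _ _ h1 h2
  rle_refl x := P.rle_refl _
  rle_antisymm x y h1 h2 := e.symm.injective (P.rle_antisymm _ _ h1 h2)
  rle_trans x y z h1 h2 := P.rle_trans _ _ _ h1 h2
  compat x y hxy := P.compat _ _ fun h => hxy (e.symm.injective h)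

@[simp] theorem map_hle (e : α ≃ β) (P : PlanePoset α) (x y : β) :
    (P.map e).hle x y ↔ P.hle (e.symm x) (e.symm y) := Iff.rfl

@[simp] theorem map_rle (e : α ≃ β) (P : PlanePoset α) (x y : β) :
    (P.map e).rle x y ↔ P.rle (e.symm x) (e.symm y) := Iff.rfl

/-- The composition `PQ` of two plane posets: `x ≤_r y` for every `x ∈ P`, `y ∈ Q`. -/
def comp (P : PlanePoset α) (Q : PlanePoset β) : PlanePoset (α ⊕ β) where
  hle x y :=
    match x, y with
    | Sum.inl a, Sum.inl b => P.hle a b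
    | Sum.inr a, Sum.inr b => Q.hle a b
    | _, _ => False
  rle x y :=
    match x, y with
    | Sum.inl a, Sum.inl b => P.rle a b
    | Sum.inr a, Sum.inr b => Q.rle a b
    | Sum.inl _, Sum.inr _ => True
    | Sum.inr _, Sum.inl _ => False
  hle_refl := by
    rintro (a | a)
    · exact P.hle_refl a
    · exact Q.hle_refl a
  hle_antisymm := by
    rintro (a | a) (b | b) h1 h2
    · exact congrArg Sum.inl (P.hle_antisymm a b h1 h2)
    · exact h1.elim
    · exact h1.elim
    · exact congrArg Sum.inr (Q.hle_antisymm a b h1 h2)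
  hle_trans := by
    rintro (a | a) (b | b) (c | c) h1 h2 <;>
      first
        | exact P.hle_trans _ _ _ h1 h2
        | exact Q.hle_trans _ _ _ h1 h2
        | exact h1.elim
        | exact h2.elim
  rle_refl := by
    rintro (a | a)
    · exact P.rle_refl a
    · exact Q.rle_refl a
  rle_antisymm := by
    rintro (a | a) (b | b) h1 h2
    · exact congrArg Sum.inl (P.rle_antisymm a b h1 h2)
    · exact h2.elim
    · exact h1.elim
    · exact congrArg Sum.inr (Q.rle_antisymm a b h1 h2)
  rle_trans := by
    rintro (a | a) (b | b) (c | c) h1 h2 <;>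
      first
        | exact P.rle_trans _ _ _ h1 h2
        | exact Q.rle_trans _ _ _ h1 h2
        | exact h1.elim
        | exact h2.elim
        | trivial
  compat := by
    rintro (a | a) (b | b) hne
    · exact P.compat a b fun h => hne (congrArg Sum.inl h)
    · show (False ∨ False) ↔ ¬ (True ∨ False)
      simp
    · show (False ∨ False) ↔ ¬ (False ∨ True)
      simp
    · exact Q.compat a b fun h => hne (congrArg Sum.inr h)

/-- The product `P ▷ Q` of two plane posets: `x ≤_h y` for every `x ∈ P`, `y ∈ Q`. -/
def hcomp (P : PlanePoset α) (Q : PlanePoset β) : PlanePoset (α ⊕ β) where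
  hle x y :=
    match x, y with
    | Sum.inl a, Sum.inl b => P.hle a b
    | Sum.inr a, Sum.inr b => Q.hle a b
    | Sum.inl _, Sum.inr _ => True
    | Sum.inr _, Sum.inl _ => False
  rle x y :=
    match x, y with
    | Sum.inl a, Sum.inl b => P.rle a b
    | Sum.inr a, Sum.inr b => Q.rle a b
    | _, _ => False
  hle_refl := by
    rintro (a | a)
    · exact P.hle_refl a
    · exact Q.hle_refl a
  hle_antisymm := by
    rintro (a | a) (b | b) h1 h2
    · exact congrArg Sum.inl (P.hle_antisymm a b h1 h2)
    · exact h2.elim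
    · exact h1.elim
    · exact congrArg Sum.inr (Q.hle_antisymm a b h1 h2)
  hle_trans := by
    rintro (a | a) (b | b) (c | c) h1 h2 <;>
      first
        | exact P.hle_trans _ _ _ h1 h2
        | exact Q.hle_trans _ _ _ h1 h2
        | exact h1.elim
        | exact h2.elim
        | trivial
  rle_refl := by
    rintro (a | a)
    · exact P.rle_refl a
    · exact Q.rle_refl a
  rle_antisymm := by
    rintro (a | a) (b | b) h1 h2
    · exact congrArg Sum.inl (P.rle_antisymm a b h1 h2)
    · exact h1.elim
    · exact h1.elim
    · exact congrArg Sum.inr (Q.rle_antisymm a b h1 h2)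
  rle_trans := by
    rintro (a | a) (b | b) (c | c) h1 h2 <;>
      first
        | exact P.rle_trans _ _ _ h1 h2
        | exact Q.rle_trans _ _ _ h1 h2
        | exact h1.elim
        | exact h2.elim
  compat := by
    rintro (a | a) (b | b) hne
    · exact P.compat a b fun h => hne (congrArg Sum.inl h)
    · show (True ∨ False) ↔ ¬ (False ∨ False)
      simp
    · show (False ∨ True) ↔ ¬ (False ∨ False)
      simp
    · exact Q.compat a b fun h => hne (congrArg Sum.inr h)

/-- Restriction of a plane poset to a subset (a plane subposet). -/
def res (P : PlanePoset α) (s : Finset α) : PlanePoset {x : α // x ∈ s} where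
  hle x y := P.hle x.1 y.1
  rle x y := P.rle x.1 y.1
  hle_refl x := P.hle_refl _
  hle_antisymm x y h1 h2 := Subtype.ext (P.hle_antisymm _ _ h1 h2)
  hle_trans x y z h1 h2 := P.hle_trans _ _ _ h1 h2
  rle_refl x := P.rle_refl _
  rle_antisymm x y h1 h2 := Subtype.ext (P.rle_antisymm _ _ h1 h2)
  rle_trans x y z h1 h2 := P.rle_trans _ _ _ h1 h2
  compat x y hxy := P.compat _ _ fun h => hxy (Subtype.ext h)

/-- The involution `ι` exchanging the two partial orders. -/
def swap (P : PlanePoset α) : PlanePoset α where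
  hle := P.rle
  rle := P.hle
  hle_refl := P.rle_refl
  hle_antisymm := P.rle_antisymm
  hle_trans := P.rle_trans
  rle_refl := P.hle_refl
  rle_antisymm := P.hle_antisymm
  rle_trans := P.hle_trans
  compat x y hxy := by
    have h := P.compat x y hxy
    tauto

end PlanePoset

/-- A plane poset structure on `Fin n` is canonical when the induced total order
is the usual order on `{1, …, n}`. -/
def IsCanon {n : ℕ} (P : PlanePoset (Fin n)) : Prop :=
  ∀ x y : Fin n, (P.hle x y ∨ P.rle x y) ↔ x ≤ y

/-- `PP(n)`: (isoclasses of) plane posets of cardinality `n`, realized as the canonical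
plane poset structures on `{1, …, n}`. -/
def CanonPP (n : ℕ) : Type := { P : PlanePoset (Fin n) // IsCanon P }

namespace CanonPP

/-- The empty plane poset, unit of both products. -/
def one : CanonPP 0 :=
  ⟨{ hle := fun _ _ => True
     rle := fun _ _ => True
     hle_refl := fun _ => trivial
     hle_antisymm := fun x => x.elim0
     hle_trans := fun _ _ _ _ _ => trivial
     rle_refl := fun _ => trivial
     rle_antisymm := fun x => x.elim0
     rle_trans := fun _ _ _ _ _ => trivial
     compat := fun x => x.elim0 }, fun x => x.elim0⟩

/-- The composition `PQ` of plane posets, realized canonically. -/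
def comp {k l : ℕ} (P : CanonPP k) (Q : CanonPP l) : CanonPP (k + l) :=
  ⟨(P.1.comp Q.1).map finSumFinEquiv, by
    intro x y
    obtain ⟨a, rfl⟩ := finSumFinEquiv.surjective x
    obtain ⟨b, rfl⟩ := finSumFinEquiv.surjective y
    simp only [PlanePoset.map_hle, PlanePoset.map_rle, Equiv.symm_apply_apply]
    rcases a with a | a <;> rcases b with b | b
    · show (P.1.hle a b ∨ P.1.rle a b) ↔ _
      rw [P.2 a b, finSumFinEquiv_apply_left, finSumFinEquiv_apply_left]
      simp only [Fin.le_def, Fin.coe_castAdd]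
      try omega
    · show (False ∨ True) ↔ _
      rw [finSumFinEquiv_apply_left, finSumFinEquiv_apply_right]
      have ha := a.isLt
      simp only [false_or, true_iff, Fin.le_def, Fin.coe_castAdd, Fin.coe_natAdd]
      omega
    · show (False ∨ False) ↔ _
      rw [finSumFinEquiv_apply_right, finSumFinEquiv_apply_left]
      have hb := b.isLt
      simp only [or_self, false_iff, Fin.le_def, Fin.coe_natAdd, Fin.coe_castAdd]
      omega
    · show (Q.1.hle a b ∨ Q.1.rle a b) ↔ _
      rw [Q.2 a b, finSumFinEquiv_apply_right, finSumFinEquiv_apply_right]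
      simp only [Fin.le_def, Fin.coe_natAdd]
      omega⟩

/-- The product `P ▷ Q` of plane posets, realized canonically. -/
def hcomp {k l : ℕ} (P : CanonPP k) (Q : CanonPP l) : CanonPP (k + l) :=
  ⟨(P.1.hcomp Q.1).map finSumFinEquiv, by
    intro x y
    obtain ⟨a, rfl⟩ := finSumFinEquiv.surjective x
    obtain ⟨b, rfl⟩ := finSumFinEquiv.surjective y
    simp only [PlanePoset.map_hle, PlanePoset.map_rle, Equiv.symm_apply_apply]
    rcases a with a | a <;> rcases b with b | b
    · show (P.1.hle a b ∨ P.1.rle a b) ↔ _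
      rw [P.2 a b, finSumFinEquiv_apply_left, finSumFinEquiv_apply_left]
      simp only [Fin.le_def, Fin.coe_castAdd]
      try omega
    · show (True ∨ False) ↔ _
      rw [finSumFinEquiv_apply_left, finSumFinEquiv_apply_right]
      have ha := a.isLt
      simp only [or_false, true_iff, Fin.le_def, Fin.coe_castAdd, Fin.coe_natAdd]
      omega
    · show (False ∨ False) ↔ _
      rw [finSumFinEquiv_apply_right, finSumFinEquiv_apply_left]
      have hb := b.isLt
      simp only [or_self, false_iff, Fin.le_def, Fin.coe_natAdd, Fin.coe_castAdd]
      omega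
    · show (Q.1.hle a b ∨ Q.1.rle a b) ↔ _
      rw [Q.2 a b, finSumFinEquiv_apply_right, finSumFinEquiv_apply_right]
      simp only [Fin.le_def, Fin.coe_natAdd]
      omega⟩

/-- Restriction of a plane poset to a plane subposet, realized canonically via the unique
increasing bijection. -/
def restrict {n : ℕ} (P : CanonPP n) (s : Finset (Fin n)) : CanonPP s.card :=
  ⟨(P.1.res s).map (s.orderIsoOfFin rfl).toEquiv.symm, by
    intro i j
    simp only [PlanePoset.map_hle, PlanePoset.map_rle, Equiv.symm_symm]
    show (P.1.hle ((s.orderIsoOfFin rfl).toEquiv i).1 ((s.orderIsoOfFin rfl).toEquiv j).1 ∨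
          P.1.rle ((s.orderIsoOfFin rfl).toEquiv i).1 ((s.orderIsoOfFin rfl).toEquiv j).1) ↔ i ≤ j
    rw [P.2]
    rw [Subtype.coe_le_coe]
    exact (s.orderIsoOfFin rfl).le_iff_le⟩

/-- The involution `ι`, on canonical plane posets. -/
def iota {n : ℕ} (P : CanonPP n) : CanonPP n :=
  ⟨P.1.swap, fun x y => by rw [or_comm]; exact P.2 x y⟩

end CanonPP

/-- The partial (weak Bruhat) order on `PP(n)`: `P ≤ Q` iff `x ≤_h y` in `Q` implies
`x ≤_h y` in `P` (the increasing bijection between canonical representatives being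
the identity). -/
def PPle {n : ℕ} (P Q : CanonPP n) : Prop :=
  ∀ x y : Fin n, Q.1.hle x y → P.1.hle x y

/-- Strict version of the order on `PP(n)`. -/
def PPlt {n : ℕ} (P Q : CanonPP n) : Prop := PPle P Q ∧ P ≠ Q

/-- Covering relation of the poset `(PP(n), ≤)`. -/
def PPcovBy {n : ℕ} (P Q : CanonPP n) : Prop :=
  PPlt P Q ∧ ∀ T : CanonPP n, PPlt P T → ¬ PPlt T Q

/-- `E(P) = {(i,j) | i <_h j}`. -/
def Eset {n : ℕ} (P : CanonPP n) : Set (Fin n × Fin n) :=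
  {p | P.1.hle p.1 p.2 ∧ p.1 ≠ p.2}

/-- A biideal of a plane poset: an ideal for both partial orders, equivalently an ideal
for the induced total order. -/
def IsBiideal {n : ℕ} (P : CanonPP n) (I : Finset (Fin n)) : Prop :=
  ∀ x y : Fin n, x ∈ I → (P.1.hle x y ∨ P.1.rle x y) → y ∈ I

/-- `h_s^t = #{(x,y) ∈ s × t | x <_h y}`. -/
def hNum {n : ℕ} (P : CanonPP n) (s t : Finset (Fin n)) : ℕ :=
  ((s ×ˢ t).filter (fun p : Fin n × Fin n => P.1.hle p.1 p.2 ∧ p.1 ≠ p.2)).card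

/-- `φ(P,Q) = #{(x,y) | x <_r y in P and x <_h y in Q} + #{(x,y) | x <_h y in P and
x <_r y in Q}` (via the identity increasing bijection). -/
def phi {n : ℕ} (P Q : CanonPP n) : ℕ :=
  (Finset.univ.filter (fun p : Fin n × Fin n =>
      (P.1.rle p.1 p.2 ∧ p.1 ≠ p.2) ∧ (Q.1.hle p.1 p.2 ∧ p.1 ≠ p.2))).card +
  (Finset.univ.filter (fun p : Fin n × Fin n =>
      (P.1.hle p.1 p.2 ∧ p.1 ≠ p.2) ∧ (Q.1.rle p.1 p.2 ∧ p.1 ≠ p.2))).card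

/-- The level `ℓ(P) = #{(x,y) | x <_r y}`. -/
def level {n : ℕ} (P : CanonPP n) : ℕ :=
  (Finset.univ.filter (fun p : Fin n × Fin n => P.1.rle p.1 p.2 ∧ p.1 ≠ p.2)).card

/-- The plane poset `P_σ = Ψ_n(σ)` associated to a permutation `σ`. -/
def PsiPerm {n : ℕ} (σ : Equiv.Perm (Fin n)) : CanonPP n :=
  ⟨{ hle := fun i j => i ≤ j ∧ σ.symm i ≤ σ.symm j
     rle := fun i j => i ≤ j ∧ σ.symm j ≤ σ.symm i
     hle_refl := fun x => ⟨le_refl x, le_refl _⟩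
     hle_antisymm := fun x y h1 h2 => le_antisymm h1.1 h2.1
     hle_trans := fun x y z h1 h2 => ⟨le_trans h1.1 h2.1, le_trans h1.2 h2.2⟩
     rle_refl := fun x => ⟨le_refl x, le_refl _⟩
     rle_antisymm := fun x y h1 h2 => le_antisymm h1.1 h2.1
     rle_trans := fun x y z h1 h2 => ⟨le_trans h1.1 h2.1, le_trans h2.2 h1.2⟩
     compat := by
       intro x y hxy
       have h1 : (x : ℕ) ≠ (y : ℕ) := fun h => hxy (Fin.ext h)
       have h2 : ((σ.symm x : Fin n) : ℕ) ≠ ((σ.symm y : Fin n) : ℕ) :=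
         fun h => hxy (σ.symm.injective (Fin.ext h))
       simp only [Fin.le_def]
       omega },
   by
     intro x y
     show ((x ≤ y ∧ σ.symm x ≤ σ.symm y) ∨ (x ≤ y ∧ σ.symm y ≤ σ.symm x)) ↔ x ≤ y
     simp only [Fin.le_def]
     omega⟩

/-- One step of the weak Bruhat order: exchange two consecutive letters `i < j`
(`i` appearing immediately before `j`) in the word `σ(1) ⋯ σ(n)`. -/
def bruhatStep {n : ℕ} (σ τ : Equiv.Perm (Fin n)) : Prop :=
  ∃ (i j k : Fin n) (hk : (k : ℕ) + 1 < n),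
    i < j ∧ σ k = i ∧ σ ⟨(k : ℕ) + 1, hk⟩ = j ∧ τ = Equiv.swap i j * σ

/-- The set of (isoclasses of) plane posets. -/
abbrev PPS : Type := Σ n : ℕ, CanonPP n

/-- Composition product on plane posets. -/
def PPS.comp (P Q : PPS) : PPS := ⟨P.1 + Q.1, P.2.comp Q.2⟩

/-- The product `▷` on plane posets. -/
def PPS.hcomp (P Q : PPS) : PPS := ⟨P.1 + Q.1, P.2.hcomp Q.2⟩

/-- Value of the coproduct `Δ_q` on a plane poset:
`Δ_q(P) = Σ_{I biideal of P} q^{h_{P∖I}^I} (P∖I) ⊗ I`. -/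
def deltaOn (K : Type) [Field K] (q : K) {n : ℕ} (P : CanonPP n) :
    (PPS →₀ K) ⊗[K] (PPS →₀ K) :=
  ∑ I ∈ Finset.univ.filter (fun I : Finset (Fin n) => IsBiideal P I),
    q ^ hNum P Iᶜ I •
      (Finsupp.single (⟨Iᶜ.card, P.restrict Iᶜ⟩ : PPS) (1 : K) ⊗ₜ[K]
        Finsupp.single (⟨I.card, P.restrict I⟩ : PPS) (1 : K))

/-- The coproduct `Δ_q` on `h_PP`, extended linearly. -/
def Delta (K : Type) [Field K] (q : K) :
    (PPS →₀ K) →ₗ[K] (PPS →₀ K) ⊗[K] (PPS →₀ K) :=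
  Finsupp.lift _ K PPS fun P => deltaOn K q P.2

/-- The composition product `m`, extended bilinearly to `h_PP`. -/
def mulPP (K : Type) [Field K] : (PPS →₀ K) →ₗ[K] (PPS →₀ K) →ₗ[K] (PPS →₀ K) :=
  Finsupp.lift _ K PPS fun P =>
    Finsupp.lift _ K PPS fun Q => Finsupp.single (PPS.comp P Q) 1

/-- The componentwise product on `h_PP ⊗ h_PP`. -/
def mulT (K : Type) [Field K] :
    ((PPS →₀ K) ⊗[K] (PPS →₀ K)) →ₗ[K] ((PPS →₀ K) ⊗[K] (PPS →₀ K)) →ₗ[K]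
      ((PPS →₀ K) ⊗[K] (PPS →₀ K)) :=
  TensorProduct.map₂ (mulPP K) (mulPP K)

/-- Multiplication of the basis element of a plane poset by `q^{n·c}` where `n` is its
cardinality. -/
def scale (K : Type) [Field K] (q : K) (c : ℕ) : (PPS →₀ K) →ₗ[K] (PPS →₀ K) :=
  Finsupp.lift _ K PPS fun P => q ^ (P.1 * c) • Finsupp.single P 1

/-- Right multiplication by a plane poset for the product `▷`. -/
def rmulH (K : Type) [Field K] (Q : PPS) : (PPS →₀ K) →ₗ[K] (PPS →₀ K) :=
  Finsupp.lift _ K PPS fun P => Finsupp.single (PPS.hcomp P Q) 1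

/-- Left multiplication by a plane poset for the product `▷`. -/
def lmulH (K : Type) [Field K] (P : PPS) : (PPS →₀ K) →ₗ[K] (PPS →₀ K) :=
  Finsupp.lift _ K PPS fun Q => Finsupp.single (PPS.hcomp P Q) 1

/-- The pairing on plane posets of the same cardinality:
`⟨P,Q⟩_q = q^{φ(P,Q)}` if `ι(P) ≤ Q`, and `0` otherwise. -/
def pairN (K : Type) [Field K] (q : K) {n : ℕ} (P Q : CanonPP n) : K :=
  if PPle (CanonPP.iota P) Q then q ^ phi P Q else 0

/-- The pairing `⟨-,-⟩_q` on plane posets (zero on posets of different cardinalities). -/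
def pairPP (K : Type) [Field K] (q : K) (P Q : PPS) : K :=
  if h : P.1 = Q.1 then pairN K q (cast (congrArg CanonPP h) P.2) Q.2 else 0

/-- The pairing `⟨-,-⟩_q`, extended bilinearly to `h_PP`. -/
def Bform (K : Type) [Field K] (q : K) : (PPS →₀ K) →ₗ[K] (PPS →₀ K) →ₗ[K] K :=
  Finsupp.lift _ K PPS fun P => Finsupp.lift K K PPS fun Q => pairPP K q P Q

end


lemma pp_le_apply {m : ℕ} {f : Fin m → ℕ} (hf : StrictMono f) : ∀ x : Fin m, (x : ℕ) ≤ f x := by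
  intro x
  obtain ⟨j, hj⟩ := x
  induction j with
  | zero => exact Nat.zero_le _
  | succ i ih =>
    have h1 : (⟨i, Nat.lt_of_succ_lt hj⟩ : Fin m) < ⟨i + 1, hj⟩ := Nat.lt_succ_self i
    have h2 := hf h1
    have h3 := ih (Nat.lt_of_succ_lt hj)
    simp only [Fin.val_mk] at h3 ⊢
    omega

lemma pp_strictMono_fix {m : ℕ} (f : Fin m → ℕ) (hf : StrictMono f) (a : ℕ)
    (hlo : ∀ x, a ≤ f x) (hhi : ∀ x, f x < a + m) : ∀ x, f x = a + x := by
  have hu : StrictMono (fun x => f x - a) := by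
    intro x y hxy
    have := hf hxy; have := hlo x; have := hlo y
    simp only []
    omega
  have hle1 : ∀ x : Fin m, a + x ≤ f x := by
    intro x
    have h := pp_le_apply hu x
    have := hlo x
    omega
  have hv : StrictMono (fun y : Fin m => (a + m - 1) - f y.rev) := by
    intro x y hxy
    have hr : y.rev < x.rev := by rwa [Fin.rev_lt_rev]
    have := hf hr
    have := hhi x.rev; have := hhi y.rev
    simp only []
    omega
  have hle2 : ∀ x : Fin m, f x ≤ a + x := by
    intro x
    have h := pp_le_apply hv x.rev
    rw [Fin.rev_rev] at h
    have hx : (x.rev : ℕ) = m - (x + 1) := Fin.val_rev x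
    have := hhi x
    have := x.isLt
    omega
  intro x
  exact le_antisymm (hle2 x) (hle1 x)

lemma pp_cardLt (n c : ℕ) (h : c ≤ n) :
    (Finset.univ.filter (fun x : Fin n => (x : ℕ) < c)).card = c := by
  have he : Finset.univ.filter (fun x : Fin n => (x : ℕ) < c)
      = Finset.image (Fin.castLE h) Finset.univ := by
    ext x
    simp only [Finset.mem_filter, Finset.mem_univ, true_and, Finset.mem_image]
    constructor
    · intro hx
      exact ⟨⟨x, hx⟩, rfl⟩
    · rintro ⟨a, rfl⟩
      exact a.isLt
  rw [he, Finset.card_image_of_injective _ (Fin.castLE_injective h), Finset.card_univ,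
    Fintype.card_fin]

lemma pp_cast_hle {n m : ℕ} (h : n = m) (C : CanonPP n) (x y : Fin m) :
    (cast (congrArg CanonPP h) C).1.hle x y ↔
      C.1.hle (Fin.cast h.symm x) (Fin.cast h.symm y) := by
  subst h; rfl

lemma pp_restrict_hle {n : ℕ} (R : CanonPP n) (s : Finset (Fin n)) (i j : Fin s.card) :
    (R.restrict s).1.hle i j ↔
      R.1.hle ((s.orderIsoOfFin rfl) i).1 ((s.orderIsoOfFin rfl) j).1 := Iff.rfl

lemma pp_ordIso_val {n : ℕ} (s : Finset (Fin n)) (a : ℕ)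
    (hlo : ∀ x ∈ s, a ≤ (x : ℕ)) (hhi : ∀ x ∈ s, (x : ℕ) < a + s.card) :
    ∀ i : Fin s.card, (((s.orderIsoOfFin rfl) i).1 : ℕ) = a + i := by
  have hm : StrictMono (fun i : Fin s.card => (((s.orderIsoOfFin rfl) i).1 : ℕ)) := by
    intro i j hij
    exact (s.orderIsoOfFin rfl).lt_iff_lt.mpr hij
  exact pp_strictMono_fix _ hm a
    (fun i => hlo _ ((s.orderIsoOfFin rfl) i).2)
    (fun i => hhi _ ((s.orderIsoOfFin rfl) i).2)

/-- Let `P, Q, R` be plane posets with `|P| + |Q| = |R|`. Then `PQ ≤ R`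
iff there is a plane subposet `I₀` of `R` with `R = (R∖I₀)I₀`, `P ≤ R∖I₀` and `Q ≤ I₀`;
moreover such an `I₀` is unique, and equals `θ_{PQ,R}(Q)`, the set of the `|Q|` greatest
elements of `R`. -/

theorem statement14 {k l : ℕ} (P : CanonPP k) (Q : CanonPP l) (R : CanonPP (k + l)) :
    (PPle (P.comp Q) R ↔
      ∃ I : Finset (Fin (k + l)),
        (∀ x ∉ I, ∀ y ∈ I, x ≠ y → R.1.rle x y) ∧
        ∃ (h1 : Iᶜ.card = k) (h2 : I.card = l),
          PPle P (cast (congrArg CanonPP h1) (R.restrict Iᶜ)) ∧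
          PPle Q (cast (congrArg CanonPP h2) (R.restrict I))) ∧
    ∀ I : Finset (Fin (k + l)),
      ((∀ x ∉ I, ∀ y ∈ I, x ≠ y → R.1.rle x y) ∧
        ∃ (h1 : Iᶜ.card = k) (h2 : I.card = l),
          PPle P (cast (congrArg CanonPP h1) (R.restrict Iᶜ)) ∧
          PPle Q (cast (congrArg CanonPP h2) (R.restrict I))) →
      I = Finset.univ.filter (fun i : Fin (k + l) => k ≤ (i : ℕ)) := by
  set T : Finset (Fin (k + l)) :=
    Finset.univ.filter (fun i : Fin (k + l) => k ≤ (i : ℕ)) with hTdef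
  have hmemT : ∀ x : Fin (k + l), x ∈ T ↔ k ≤ (x : ℕ) := by
    intro x
    simp [hTdef]
  have hmemTc : ∀ x : Fin (k + l), x ∈ Tᶜ ↔ (x : ℕ) < k := by
    intro x
    simp only [Finset.mem_compl, hmemT, not_le]
  have hTcard : T.card = l := by
    have hTeq : T = (Finset.univ.filter (fun x : Fin (k + l) => (x : ℕ) < k))ᶜ := by
      ext x
      simp only [hmemT, Finset.mem_compl, Finset.mem_filter, Finset.mem_univ, true_and, not_lt]
    rw [hTeq, Finset.card_compl, Fintype.card_fin, pp_cardLt (k + l) k (by omega)]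
    omega
  have hTccard : Tᶜ.card = k := by
    rw [Finset.card_compl, Fintype.card_fin, hTcard]
    omega
  have fC : ∀ i : Fin (Tᶜ.card), (((Tᶜ.orderIsoOfFin rfl) i).1 : ℕ) = 0 + i :=
    pp_ordIso_val Tᶜ 0 (fun x _ => Nat.zero_le _)
      (fun x hx => by rw [hTccard]; have := (hmemTc x).mp hx; omega)
  have fI : ∀ i : Fin (T.card), (((T.orderIsoOfFin rfl) i).1 : ℕ) = k + i :=
    pp_ordIso_val T k (fun x hx => (hmemT x).mp hx)
      (fun x hx => by rw [hTcard]; exact x.isLt)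
  have hcomp_ll : ∀ (a b : Fin k),
      (P.comp Q).1.hle (Fin.castAdd l a) (Fin.castAdd l b) ↔ P.1.hle a b := by
    intro a b
    show (P.1.comp Q.1).hle (finSumFinEquiv.symm (Fin.castAdd l a))
      (finSumFinEquiv.symm (Fin.castAdd l b)) ↔ _
    rw [finSumFinEquiv_symm_apply_castAdd, finSumFinEquiv_symm_apply_castAdd]
    exact Iff.rfl
  have hcomp_lr : ∀ (a : Fin k) (b : Fin l),
      ¬ (P.comp Q).1.hle (Fin.castAdd l a) (Fin.natAdd k b) := by
    intro a b hab
    have : (P.1.comp Q.1).hle (finSumFinEquiv.symm (Fin.castAdd l a))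
      (finSumFinEquiv.symm (Fin.natAdd k b)) := hab
    rw [finSumFinEquiv_symm_apply_castAdd, finSumFinEquiv_symm_apply_natAdd] at this
    exact this
  have hcomp_rr : ∀ (a b : Fin l),
      (P.comp Q).1.hle (Fin.natAdd k a) (Fin.natAdd k b) ↔ Q.1.hle a b := by
    intro a b
    show (P.1.comp Q.1).hle (finSumFinEquiv.symm (Fin.natAdd k a))
      (finSumFinEquiv.symm (Fin.natAdd k b)) ↔ _
    rw [finSumFinEquiv_symm_apply_natAdd, finSumFinEquiv_symm_apply_natAdd]
    exact Iff.rfl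
  have huniq : ∀ I : Finset (Fin (k + l)),
      (∀ x ∉ I, ∀ y ∈ I, x ≠ y → R.1.rle x y) → I.card = l → I = T := by
    intro I hrle hcard
    have horder : ∀ x ∉ I, ∀ y ∈ I, (x : ℕ) < (y : ℕ) := by
      intro x hx y hy
      have hne : x ≠ y := fun h => hx (h ▸ hy)
      have hr := hrle x hx y hy hne
      have hle : (x : ℕ) ≤ (y : ℕ) := (R.2 x y).mp (Or.inr hr)
      have hvne : (x : ℕ) ≠ (y : ℕ) := fun h => hne (Fin.ext h)
      omega
    have hIc : Iᶜ.card = k := by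
      rw [Finset.card_compl, Fintype.card_fin, hcard]
      omega
    ext i
    rw [hmemT]
    constructor
    · intro hi
      by_contra hik
      push_neg at hik
      have hsub : Iᶜ ⊆ Finset.univ.filter (fun x : Fin (k + l) => (x : ℕ) < (i : ℕ)) := by
        intro x hx
        rw [Finset.mem_compl] at hx
        simp only [Finset.mem_filter, Finset.mem_univ, true_and]
        exact horder x hx i hi
      have hc := Finset.card_le_card hsub
      rw [hIc, pp_cardLt (k + l) i (le_of_lt i.isLt)] at hc
      omega
    · intro hki
      by_contra hiI
      have hsub : I ⊆ (Finset.univ.filter (fun x : Fin (k + l) => (x : ℕ) < (i : ℕ) + 1))ᶜ := by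
        intro y hy
        rw [Finset.mem_compl]
        simp only [Finset.mem_filter, Finset.mem_univ, true_and, not_lt]
        exact horder i hiI y hy
      have hc := Finset.card_le_card hsub
      rw [hcard, Finset.card_compl, Fintype.card_fin, pp_cardLt (k + l) ((i : ℕ) + 1) i.isLt]
        at hc
      have := i.isLt
      omega
  constructor
  · constructor
    · -- forward direction
      intro h
      refine ⟨T, ?_, hTccard, hTcard, ?_, ?_⟩
      · intro x hx y hy hne
        have hxk : (x : ℕ) < k := (hmemTc x).mp (Finset.mem_compl.mpr hx)
        have hky : k ≤ (y : ℕ) := (hmemT y).mp hy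
        have hxy : x ≤ y := by
          rw [Fin.le_def]; omega
        rcases (R.2 x y).mpr hxy with hh | hr
        · exfalso
          have hcc := h x y hh
          have hx' : x = Fin.castAdd l ⟨(x : ℕ), hxk⟩ := Fin.ext rfl
          have hy' : y = Fin.natAdd k ⟨(y : ℕ) - k, by omega⟩ := Fin.ext (by simp; omega)
          rw [hx', hy'] at hcc
          exact hcomp_lr _ _ hcc
        · exact hr
      · intro a b hab
        replace hab := (pp_cast_hle hTccard (R.restrict Tᶜ) a b).mp hab
        rw [pp_restrict_hle] at hab
        have e1 : ((Tᶜ.orderIsoOfFin rfl) (Fin.cast hTccard.symm a)).1 = Fin.castAdd l a :=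
          Fin.ext (by rw [fC]; simp [Fin.cast])
        have e2 : ((Tᶜ.orderIsoOfFin rfl) (Fin.cast hTccard.symm b)).1 = Fin.castAdd l b :=
          Fin.ext (by rw [fC]; simp [Fin.cast])
        rw [e1, e2] at hab
        exact (hcomp_ll a b).mp (h _ _ hab)
      · intro a b hab
        replace hab := (pp_cast_hle hTcard (R.restrict T) a b).mp hab
        rw [pp_restrict_hle] at hab
        have e1 : ((T.orderIsoOfFin rfl) (Fin.cast hTcard.symm a)).1 = Fin.natAdd k a :=
          Fin.ext (by rw [fI]; rfl)
        have e2 : ((T.orderIsoOfFin rfl) (Fin.cast hTcard.symm b)).1 = Fin.natAdd k b :=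
          Fin.ext (by rw [fI]; rfl)
        rw [e1, e2] at hab
        exact (hcomp_rr a b).mp (h _ _ hab)
    · -- backward direction
      rintro ⟨I, hrle, h1, h2, hP, hQ⟩
      have hIT : I = T := huniq I hrle h2
      subst hIT
      intro x y hxy
      have hxyle : (x : ℕ) ≤ (y : ℕ) := (R.2 x y).mp (Or.inl hxy)
      by_cases hx : (x : ℕ) < k <;> by_cases hy' : (y : ℕ) < k
      · -- both in the lower part
        have hx' : x = Fin.castAdd l ⟨(x : ℕ), hx⟩ := Fin.ext rfl
        have hyy : y = Fin.castAdd l ⟨(y : ℕ), hy'⟩ := Fin.ext rfl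
        rw [hx', hyy, hcomp_ll]
        apply hP
        refine (pp_cast_hle h1 (R.restrict Tᶜ) _ _).mpr ?_
        rw [pp_restrict_hle]
        have e1 : ((Tᶜ.orderIsoOfFin rfl) (Fin.cast h1.symm ⟨(x : ℕ), hx⟩)).1 = x :=
          Fin.ext (by rw [fC]; simp [Fin.cast])
        have e2 : ((Tᶜ.orderIsoOfFin rfl) (Fin.cast h1.symm ⟨(y : ℕ), hy'⟩)).1 = y :=
          Fin.ext (by rw [fC]; simp [Fin.cast])
        rw [e1, e2]
        exact hxy
      · -- x low, y high : contradiction with rle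
        exfalso
        have hne : x ≠ y := fun h => by rw [h] at hx; omega
        have hxI : x ∉ T := fun hm => by rw [hmemT] at hm; omega
        have hyI : y ∈ T := (hmemT y).mpr (by omega)
        have hr := hrle x hxI y hyI hne
        exact (R.1.compat x y hne).mp (Or.inl hxy) (Or.inl hr)
      · -- x high, y low : contradicts total order
        exfalso
        omega
      · -- both high
        have hx' : x = Fin.natAdd k ⟨(x : ℕ) - k, by omega⟩ := Fin.ext (by simp; omega)
        have hyy : y = Fin.natAdd k ⟨(y : ℕ) - k, by omega⟩ := Fin.ext (by simp; omega)
        rw [hx', hyy, hcomp_rr]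
        apply hQ
        refine (pp_cast_hle h2 (R.restrict T) _ _).mpr ?_
        rw [pp_restrict_hle]
        have e1 : ((T.orderIsoOfFin rfl) (Fin.cast h2.symm ⟨(x : ℕ) - k, by omega⟩)).1 = x :=
          Fin.ext (by rw [fI]; simp [Fin.cast]; omega)
        have e2 : ((T.orderIsoOfFin rfl) (Fin.cast h2.symm ⟨(y : ℕ) - k, by omega⟩)).1 = y :=
          Fin.ext (by rw [fI]; simp [Fin.cast]; omega)
        rw [e1, e2]
        exact hxy
  · rintro I ⟨hrle, h1, h2, -⟩
    exact huniq I hrle h2
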